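/- In the proof that the maximal antichain structure is detected by dense sets: let P be a perfect poset, D ⊆ P dense. Then the set E of conditions q in the finite-support ω-product of ℚ(P) such that q(k) = (T, n) with T_s ∈ D for every s ∈ 2ⁿ ∩ T, is dense in ℚ(P)^{<ω}. -/

import Mathlib

def IsTree (T : Set (List Bool)) : Prop := ∀ s t : List Bool, t ∈ T → s <+: t → s ∈ T

def IsPerfectTree (T : Set (List Bool)) : Prop :=
  T.Nonempty ∧ IsTree T ∧
    ∀ s ∈ T, ∃ t₁ ∈ T, ∃ t₂ ∈ T, s <+: t₁ ∧ s <+: t₂ ∧ ¬(t₁ <+: t₂ ∨ t₂ <+: t₁)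

def cohenCond (t : List Bool) : Set (List Bool) := {s | s <+: t ∨ t <+: s}

def IsPerfectPoset (P : Set (Set (List Bool))) : Prop :=
  (∀ T ∈ P, IsPerfectTree T) ∧ (∀ t : List Bool, cohenCond t ∈ P) ∧
  (∀ S ∈ P, ∀ T ∈ P, S ∪ T ∈ P) ∧
  (∀ S ∈ P, ∀ T ∈ P, ∀ M : Set (List Bool),
    IsGreatest {M' | IsPerfectTree M' ∧ M' ⊆ S ∩ T} M → M ∈ P)

/-- `T_s = {v ∈ T : v ⊆ s ∨ s ⊆ v}`. -/
def nodeRestrict (T : Set (List Bool)) (s : List Bool) : Set (List Bool) :=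
  {v ∈ T | v <+: s ∨ s <+: v}

/-- `2^n ∩ T`: the nodes of `T` of length `n`. -/
def level (T : Set (List Bool)) (n : ℕ) : Set (List Bool) := {s ∈ T | s.length = n}

/-- The order of `ℚ(P)`: `(S,n) ≤ (T,m)` iff `S ⊆ T`, `m ≤ n`, `2^m ∩ S = 2^m ∩ T`. -/
def qLE (p q : Set (List Bool) × ℕ) : Prop :=
  p.1 ⊆ q.1 ∧ q.2 ≤ p.2 ∧ level p.1 q.2 = level q.1 q.2

/-- Conditions of the finite-support ω-product `ℚ(P)^{<ω}`. -/
def ProdCond : Type := ℕ → Option (Set (List Bool) × ℕ)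

def dom (q : ProdCond) : Set ℕ := {i | q i ≠ none}

def FinSupp (q : ProdCond) : Prop := (dom q).Finite

def Valid (P : Set (Set (List Bool))) (q : ProdCond) : Prop :=
  ∀ i a, q i = some a → a.1 ∈ P

def prodLE (p q : ProdCond) : Prop :=
  ∀ i a, q i = some a → ∃ b, p i = some b ∧ qLE b a

/-- Density of `D` in the perfect poset `P` (ordered by inclusion). -/
def DenseIn (D P : Set (Set (List Bool))) : Prop :=
  D ⊆ P ∧ ∀ T ∈ P, ∃ S ∈ D, S ⊆ T


section Aux

lemma perfect_exists_length {T : Set (List Bool)} (h : IsPerfectTree T) (n : ℕ) :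
    ∃ t ∈ T, t.length = n := by
  obtain ⟨hne, htree, hsplit⟩ := h
  have key : ∀ m : ℕ, ∃ t ∈ T, m ≤ t.length := by
    intro m
    induction m with
    | zero => obtain ⟨t, ht⟩ := hne; exact ⟨t, ht, Nat.zero_le _⟩
    | succ m ih =>
      obtain ⟨t, ht, hlen⟩ := ih
      obtain ⟨t₁, ht₁, t₂, ht₂, hp₁, hp₂, hinc⟩ := hsplit t ht
      have h1 : t ≠ t₁ := by rintro rfl; exact hinc (Or.inl hp₂)
      have : t.length < t₁.length :=
        lt_of_le_of_ne hp₁.length_le (fun he => h1 (hp₁.eq_of_length he))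
      exact ⟨t₁, ht₁, by omega⟩
  obtain ⟨t, ht, hlen⟩ := key n
  exact ⟨t.take n, htree _ _ ht (List.take_prefix _ _), by simp [hlen]⟩

lemma nodeRestrict_perfect {T : Set (List Bool)} (hT : IsPerfectTree T) {s : List Bool}
    (hs : s ∈ T) : IsPerfectTree (nodeRestrict T s) := by
  obtain ⟨hne, htree, hsplit⟩ := hT
  have hsmem : s ∈ nodeRestrict T s := ⟨hs, Or.inl List.prefix_rfl⟩
  refine ⟨⟨s, hsmem⟩, ?_, ?_⟩
  · rintro u v ⟨hv, hcomp⟩ huv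
    refine ⟨htree _ _ hv huv, ?_⟩
    rcases hcomp with h | h
    · exact Or.inl (huv.trans h)
    · rcases le_or_gt u.length s.length with hl | hl
      · exact Or.inl (List.prefix_of_prefix_length_le huv h hl)
      · exact Or.inr (List.prefix_of_prefix_length_le h huv hl.le)
  · rintro v ⟨hv, hcomp⟩
    rcases hcomp with h | h
    · -- v <+: s : split above s
      obtain ⟨t₁, ht₁, t₂, ht₂, hp₁, hp₂, hinc⟩ := hsplit s hs
      exact ⟨t₁, ⟨ht₁, Or.inr hp₁⟩, t₂, ⟨ht₂, Or.inr hp₂⟩, h.trans hp₁, h.trans hp₂, hinc⟩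
    · -- s <+: v : split above v
      obtain ⟨t₁, ht₁, t₂, ht₂, hp₁, hp₂, hinc⟩ := hsplit v hv
      exact ⟨t₁, ⟨ht₁, Or.inr (h.trans hp₁)⟩, t₂, ⟨ht₂, Or.inr (h.trans hp₂)⟩, hp₁, hp₂, hinc⟩

lemma nodeRestrict_mem {P : Set (Set (List Bool))} (hP : IsPerfectPoset P)
    {T : Set (List Bool)} (hT : T ∈ P) {s : List Bool} (hs : s ∈ T) :
    nodeRestrict T s ∈ P := by
  have hperf := nodeRestrict_perfect (hP.1 T hT) hs
  have heq : T ∩ cohenCond s = nodeRestrict T s := rfl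
  refine hP.2.2.2 T hT (cohenCond s) (hP.2.1 s) _ ⟨⟨hperf, by rw [heq]⟩, ?_⟩
  rintro M' ⟨_, hsub⟩
  rwa [heq] at hsub

lemma mem_of_subset_nodeRestrict {S T : Set (List Bool)} (hS : IsPerfectTree S)
    {s : List Bool} (hsub : S ⊆ nodeRestrict T s) : s ∈ S := by
  obtain ⟨⟨v, hv⟩, htree, hsplit⟩ := hS
  rcases (hsub hv).2 with h | h
  · obtain ⟨t₁, ht₁, t₂, ht₂, hp₁, hp₂, hinc⟩ := hsplit v hv
    rcases (hsub ht₁).2 with h₁ | h₁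
    · rcases (hsub ht₂).2 with h₂ | h₂
      · exact absurd (List.prefix_or_prefix_of_prefix h₁ h₂) hinc
      · exact htree _ _ ht₂ h₂
    · exact htree _ _ ht₁ h₁
  · exact htree _ _ hv h

lemma biUnion_mem_P {P : Set (Set (List Bool))} (hP : IsPerfectPoset P)
    {F : Set (List Bool)} (hF : F.Finite) (f : List Bool → Set (List Bool)) :
    F.Nonempty → (∀ s ∈ F, f s ∈ P) → (⋃ s ∈ F, f s) ∈ P := by
  refine Set.Finite.induction_on
    (motive := fun F _ => F.Nonempty → (∀ s ∈ F, f s ∈ P) → (⋃ s ∈ F, f s) ∈ P) F hF ?_ ?_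
  · rintro ⟨x, hx⟩; exact absurd hx (Set.notMem_empty x)
  · intro a s ha hs ih _ hf
    rcases s.eq_empty_or_nonempty with rfl | hne
    · simpa using hf a (Set.mem_insert a _)
    · have h1 : f a ∈ P := hf a (Set.mem_insert a _)
      have h2 : (⋃ t ∈ s, f t) ∈ P := ih hne (fun t ht => hf t (Set.mem_insert_of_mem _ ht))
      have : (⋃ t ∈ insert a s, f t) = f a ∪ ⋃ t ∈ s, f t := by
        simp [Set.biUnion_insert]
      rw [this]
      exact hP.2.2.1 _ h1 _ h2

/-- The key construction: shrink `T ∈ P` to `S ∈ P` with the same level-`n` nodes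
such that every `S_s`, `s ∈ 2ⁿ ∩ S`, lies in `D`. -/
lemma key_shrink {P : Set (Set (List Bool))} (hP : IsPerfectPoset P)
    {D : Set (Set (List Bool))} (hD : DenseIn D P)
    {T : Set (List Bool)} (hT : T ∈ P) (n : ℕ) :
    ∃ S ∈ P, S ⊆ T ∧ level S n = level T n ∧ ∀ s ∈ level S n, nodeRestrict S s ∈ D := by
  classical
  have hTperf := hP.1 T hT
  have hlev_fin : (level T n).Finite :=
    (List.finite_length_eq Bool n).subset (fun s hs => hs.2)
  have hlev_ne : (level T n).Nonempty := by
    obtain ⟨t, ht, hlen⟩ := perfect_exists_length hTperf n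
    exact ⟨t, ht, hlen⟩
  -- choose S_s ∈ D with S_s ⊆ T_s for each s in the level
  have hch : ∀ s : List Bool, ∃ S', s ∈ level T n → S' ∈ D ∧ S' ⊆ nodeRestrict T s := by
    intro s
    by_cases h : s ∈ level T n
    · obtain ⟨S', hS', hsub⟩ := hD.2 _ (nodeRestrict_mem hP hT h.1)
      exact ⟨S', fun _ => ⟨hS', hsub⟩⟩
    · exact ⟨∅, fun h' => absurd h' h⟩
  choose f hf using hch
  set S : Set (List Bool) := ⋃ s ∈ level T n, f s with hSdef
  have hfD : ∀ s ∈ level T n, f s ∈ D := fun s hs => (hf s hs).1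
  have hfsub : ∀ s ∈ level T n, f s ⊆ nodeRestrict T s := fun s hs => (hf s hs).2
  have hfP : ∀ s ∈ level T n, f s ∈ P := fun s hs => hD.1 (hfD s hs)
  have hfperf : ∀ s ∈ level T n, IsPerfectTree (f s) := fun s hs => hP.1 _ (hfP s hs)
  have hself : ∀ s ∈ level T n, s ∈ f s := fun s hs =>
    mem_of_subset_nodeRestrict (hfperf s hs) (hfsub s hs)
  have hSsubT : S ⊆ T := by
    rintro v hv
    simp only [hSdef, Set.mem_iUnion] at hv
    obtain ⟨s, hs, hvs⟩ := hv
    exact (hfsub s hs hvs).1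
  have hSP : S ∈ P := biUnion_mem_P hP hlev_fin f hlev_ne hfP
  have hlevel : level S n = level T n := by
    ext v
    constructor
    · rintro ⟨hv, hlen⟩
      simp only [hSdef, Set.mem_iUnion] at hv
      obtain ⟨s, hs, hvs⟩ := hv
      rcases (hfsub s hs hvs).2 with h | h
      · have : v = s := h.eq_of_length (by rw [hlen, hs.2])
        rw [this]; exact hs
      · have : s = v := h.eq_of_length (by rw [hlen, hs.2])
        rw [← this]; exact hs
    · intro hv
      refine ⟨?_, hv.2⟩
      simp only [hSdef, Set.mem_iUnion]
      exact ⟨v, hv, hself v hv⟩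
  refine ⟨S, hSP, hSsubT, hlevel, ?_⟩
  intro t ht
  rw [hlevel] at ht
  have hkey : nodeRestrict S t = f t := by
    ext v
    constructor
    · rintro ⟨hv, hcomp⟩
      simp only [hSdef, Set.mem_iUnion] at hv
      obtain ⟨s, hs, hvs⟩ := hv
      have hvcs := (hfsub s hs hvs).2
      have hftree : IsTree (f t) := ((hfperf t ht).2).1
      rcases hcomp with h | h
      · -- v <+: t
        exact hftree _ _ (hself t ht) h
      · -- t <+: v
        rcases hvcs with h' | h'
        · -- v <+: s, and t <+: v, so t <+: s with equal lengths ⇒ t = s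
          have : t = s := (h.trans h').eq_of_length (by rw [ht.2, hs.2])
          subst this; exact hvs
        · -- s <+: v and t <+: v, equal lengths ⇒ s = t
          have hst : s <+: t ∨ t <+: s := List.prefix_or_prefix_of_prefix h' h
          have : s = t := by
            rcases hst with h'' | h''
            · exact h''.eq_of_length (by rw [hs.2, ht.2])
            · exact (h''.eq_of_length (by rw [ht.2, hs.2])).symm
          subst this; exact hvs
    · intro hv
      have hvT := hfsub t ht hv
      refine ⟨?_, hvT.2⟩
      simp only [hSdef, Set.mem_iUnion]
      exact ⟨t, ht, hv⟩
  rw [hkey]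
  exact hfD t ht

end Aux

/-- for a perfect poset `P`, dense `D ⊆ P`, and `k ∈ ω`, the set
`E = {q ∈ ℚ(P)^{<ω} : q(k) = (T,n) ∧ ∀ s ∈ 2ⁿ ∩ T, T_s ∈ D}` is dense in the
finite-support ω-product `ℚ(P)^{<ω}`. -/

theorem E_is_dense (P : Set (Set (List Bool))) (hP : IsPerfectPoset P)
    (D : Set (Set (List Bool))) (hD : DenseIn D P) (k : ℕ) :
    ∀ q : ProdCond, FinSupp q → Valid P q →
      ∃ q' : ProdCond, FinSupp q' ∧ Valid P q' ∧ prodLE q' q ∧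
        ∃ T n, q' k = some (T, n) ∧ ∀ s ∈ level T n, nodeRestrict T s ∈ D := by
  classical
  intro q hq hqv
  rcases hqk : q k with _ | ⟨T, n⟩
  · -- q k = none : use an element of D below the full tree
    obtain ⟨S, hSP, hSsub, hlevel, hSD⟩ := key_shrink hP hD (hP.2.1 []) 0
    refine ⟨Function.update q k (some (S, 0)), ?_, ?_, ?_, S, 0, ?_, hSD⟩
    · refine (hq.union (Set.finite_singleton k)).subset ?_
      intro i hi
      by_cases h : i = k
      · exact Or.inr h
      · left; show q i ≠ none; exact fun hqi => hi ((Function.update_of_ne h _ _).trans hqi)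
    · intro i a ha
      by_cases h : i = k
      · subst h; have ha := (Function.update_self _ _ _).symm.trans ha
        injection ha with ha; rw [← ha]; exact hSP
      · have ha := (Function.update_of_ne h _ _).symm.trans ha; exact hqv i a ha
    · intro i a ha
      by_cases h : i = k
      · subst h; rw [hqk] at ha; exact absurd ha (by simp)
      · exact ⟨a, by exact (Function.update_of_ne h _ _).trans ha,
          Set.Subset.rfl, le_rfl, rfl⟩
    · exact Function.update_self _ _ _
  · -- q k = some (T, n)
    have hTP : T ∈ P := hqv k (T, n) hqk
    obtain ⟨S, hSP, hSsub, hlevel, hSD⟩ := key_shrink hP hD hTP n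
    refine ⟨Function.update q k (some (S, n)), ?_, ?_, ?_, S, n, ?_, hSD⟩
    · refine (hq.union (Set.finite_singleton k)).subset ?_
      intro i hi
      by_cases h : i = k
      · exact Or.inr h
      · left; show q i ≠ none; exact fun hqi => hi ((Function.update_of_ne h _ _).trans hqi)
    · intro i a ha
      by_cases h : i = k
      · subst h; have ha := (Function.update_self _ _ _).symm.trans ha
        injection ha with ha; rw [← ha]; exact hSP
      · have ha := (Function.update_of_ne h _ _).symm.trans ha; exact hqv i a ha
    · intro i a ha
      by_cases h : i = k
      · subst h; rw [hqk] at ha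
        injection ha with ha; subst ha
        exact ⟨(S, n), Function.update_self _ _ _, hSsub, le_rfl, hlevel⟩
      · exact ⟨a, by exact (Function.update_of_ne h _ _).trans ha,
          Set.Subset.rfl, le_rfl, rfl⟩
    · exact Function.update_self _ _ _
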